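/- Let α be a real number with 0 < α < π and let ξ > 0 be real. Then the function t ↦ F̃(t,α) is differentiable at ξ, and its derivative equals (cosh((2π−α)ξ) − cosh(αξ))·((2π−α)·sinh(αξ) − α·sinh((2π−α)ξ)) / (1 − cosh(αξ)·cosh((2π−α)ξ))². -/

import Mathlib

open Real

/-- The hyperbolic dispersion function of the corner transmission problem. -/
noncomputable def Ftilde (ξ α : ℝ) : ℝ :=
  Real.sinh (α * ξ) * Real.sinh ((2 * Real.pi - α) * ξ) /
    (1 - Real.cosh (α * ξ) * Real.cosh ((2 * Real.pi - α) * ξ))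

theorem hyperbolic_dispersion_hasDerivAt
    (α : ℝ) (hα0 : 0 < α) (hαπ : α < Real.pi)
    (ξ : ℝ) (hξ : 0 < ξ) :
    HasDerivAt (fun t => Ftilde t α)
      ((Real.cosh ((2 * Real.pi - α) * ξ) - Real.cosh (α * ξ)) *
        ((2 * Real.pi - α) * Real.sinh (α * ξ) - α * Real.sinh ((2 * Real.pi - α) * ξ)) /
        (1 - Real.cosh (α * ξ) * Real.cosh ((2 * Real.pi - α) * ξ)) ^ 2) ξ := by
  set b : ℝ := 2 * Real.pi - α with hb
  have hbpos : 0 < b := by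
    have := Real.pi_pos
    simp only [hb]; linarith
  have hsa : HasDerivAt (fun t : ℝ => Real.sinh (α * t)) (α * Real.cosh (α * ξ)) ξ := by
    simpa [Function.comp_def, mul_comm] using (Real.hasDerivAt_sinh (α * ξ)).comp ξ ((hasDerivAt_id ξ).const_mul α)
  have hsb : HasDerivAt (fun t : ℝ => Real.sinh (b * t)) (b * Real.cosh (b * ξ)) ξ := by
    simpa [Function.comp_def, mul_comm] using (Real.hasDerivAt_sinh (b * ξ)).comp ξ ((hasDerivAt_id ξ).const_mul b)
  have hca : HasDerivAt (fun t : ℝ => Real.cosh (α * t)) (α * Real.sinh (α * ξ)) ξ := by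
    simpa [Function.comp_def, mul_comm] using (Real.hasDerivAt_cosh (α * ξ)).comp ξ ((hasDerivAt_id ξ).const_mul α)
  have hcb : HasDerivAt (fun t : ℝ => Real.cosh (b * t)) (b * Real.sinh (b * ξ)) ξ := by
    simpa [Function.comp_def, mul_comm] using (Real.hasDerivAt_cosh (b * ξ)).comp ξ ((hasDerivAt_id ξ).const_mul b)
  have hnum := hsa.mul hsb
  have hden := (hasDerivAt_const ξ (1:ℝ)).sub (hca.mul hcb)
  have h1a : 1 < Real.cosh (α * ξ) := by
    rw [Real.one_lt_cosh]; positivity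
  have h1b : 1 < Real.cosh (b * ξ) := by
    rw [Real.one_lt_cosh]; positivity
  have hd0 : 1 - Real.cosh (α * ξ) * Real.cosh (b * ξ) ≠ 0 := by nlinarith
  have := hnum.div hden hd0
  simp only [Ftilde] at this ⊢
  convert this using 1
  · rfl
  · rfl
  · rfl
  simp only [Pi.mul_apply, Pi.sub_apply]
  have h2a : Real.cosh (α * ξ) ^ 2 - Real.sinh (α * ξ) ^ 2 = 1 :=
      Real.cosh_sq_sub_sinh_sq _
  have h2b : Real.cosh (b * ξ) ^ 2 - Real.sinh (b * ξ) ^ 2 = 1 :=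
    Real.cosh_sq_sub_sinh_sq _
  have hsq : (1 - Real.cosh (α * ξ) * Real.cosh (b * ξ)) ^ 2 ≠ 0 := pow_ne_zero _ hd0
  rw [div_eq_div_iff hsq hsq]
  linear_combination ((1 - Real.cosh (α * ξ) * Real.cosh (b * ξ)) ^ 2) *
      ((α * Real.sinh (b * ξ) * Real.cosh (b * ξ)) * h2a +
       (b * Real.sinh (α * ξ) * Real.cosh (α * ξ)) * h2b)
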